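/- Let f : ℝ² → ℝ be defined by f(u,v) = √(u² + v⁴), where ℝ² carries the Euclidean metric. Then: (i) |∇f|(0,0) = 0 and |∇f|(u,v) = √((u² + 4v⁶)/(u² + v⁴)) for every (u,v) ≠ (0,0); (ii) for every α > 0 the set M_α = {(u,v) : |u| ≤ αv²} is identifiable for f at (0,0); (iii) the set M₀ = {(u,v) : u = 0} is not identifiable for f at (0,0); and consequently (iv) there exists no locally minimal identifiable set for f at (0,0), where an identifiable set M at (0,0) is called locally minimal if for every identifiable set M′ at (0,0) there is a neighborhood N of (0,0) with M ∩ N ⊆ M′. -/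

import Mathlib

open Filter Topology
open scoped ENNReal NNReal

/-- The slope `|∇f|(x)`: the infimum of all `δ > 0` such that `x` is a local minimizer of
`f + δ·d(·,x)`; it equals `∞` at points where `f x = ⊤`. -/
noncomputable def slopeM {X : Type*} [MetricSpace X] (f : X → EReal) (x : X) : ℝ≥0∞ :=
  if f x = ⊤ then ⊤
  else sInf {δ : ℝ≥0∞ | ∃ c : ℝ, 0 < c ∧ δ = ENNReal.ofReal c ∧
    ∀ᶠ z in 𝓝 x, f x ≤ f z + ((c * dist z x : ℝ) : EReal)}

/-- The modulus of identifiability: `liminf_{x → xbar, x ∉ M, f(x) → f(xbar)} |∇f|(x)`. -/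
noncomputable def identModulus {X : Type*} [MetricSpace X] (f : X → EReal) (M : Set X)
    (xbar : X) : ℝ≥0∞ :=
  Filter.liminf (slopeM f) (𝓝[Mᶜ] xbar ⊓ Filter.comap f (𝓝 (f xbar)))

/-- `M` is an identifiable set for `f` at `xbar`: it is closed, contains `xbar`, and the
modulus of identifiability is strictly positive. -/
def Identifiable {X : Type*} [MetricSpace X] (f : X → EReal) (M : Set X) (xbar : X) : Prop :=
  IsClosed M ∧ xbar ∈ M ∧ 0 < identModulus f M xbar

lemma slopeM_coe {X : Type*} [MetricSpace X] (fr : X → ℝ) (x : X) :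
    slopeM (fun z => (fr z : EReal)) x
      = sInf {δ : ℝ≥0∞ | ∃ c : ℝ, 0 < c ∧ δ = ENNReal.ofReal c ∧
          ∀ᶠ z in 𝓝 x, fr x ≤ fr z + c * dist z x} := by
  rw [slopeM, if_neg (by simp)]
  congr 1
  ext δ
  refine exists_congr fun c => and_congr_right fun hc => and_congr_right fun _ => ?_
  refine eventually_congr (Eventually.of_forall fun z => ?_)
  rw [← EReal.coe_add, EReal.coe_le_coe_iff]

lemma slopeM_le_of_hasFDerivAt {E : Type*} [NormedAddCommGroup E] [NormedSpace ℝ E]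
    {fr : E → ℝ} {L : E →L[ℝ] ℝ} {x : E} (h : HasFDerivAt fr L x) :
    slopeM (fun z => (fr z : EReal)) x ≤ ENNReal.ofReal ‖L‖ := by
  rw [slopeM_coe]
  refine ENNReal.le_of_forall_pos_le_add fun ε hε _ => ?_
  have hc : (0:ℝ) < ‖L‖ + ε := by positivity
  refine le_trans (sInf_le ⟨‖L‖ + ε, hc, rfl, ?_⟩) ?_
  · have ho := h.isLittleO.bound (show (0:ℝ) < ε from hε)
    filter_upwards [ho] with z hz
    rw [dist_eq_norm]
    have h1 : |L (z - x)| ≤ ‖L‖ * ‖z - x‖ := L.le_opNorm _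
    have h2 : |fr z - fr x - L (z - x)| ≤ ε * ‖z - x‖ := hz
    obtain ⟨h1a, h1b⟩ := abs_le.mp h1
    obtain ⟨h2a, h2b⟩ := abs_le.mp h2
    nlinarith [h1a, h2a]
  · rw [ENNReal.ofReal_add (norm_nonneg L) (by positivity : (0:ℝ) ≤ (ε:ℝ))]
    simp [ENNReal.ofReal_coe_nnreal]

lemma norm_le_of_slope_wit {E : Type*} [NormedAddCommGroup E] [NormedSpace ℝ E]
    {fr : E → ℝ} {L : E →L[ℝ] ℝ} {x : E} (h : HasFDerivAt fr L x)
    {c : ℝ} (hc : 0 < c)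
    (hev : ∀ᶠ z in 𝓝 x, fr x ≤ fr z + c * dist z x) : ‖L‖ ≤ c := by
  by_contra hlt
  push_neg at hlt
  obtain ⟨w, hw⟩ : ∃ w : E, c * ‖w‖ < |L w| := by
    by_contra hall
    push_neg at hall
    exact absurd (L.opNorm_le_bound (le_of_lt hc) fun w => hall w) (not_le.mpr hlt)
  obtain ⟨w, hw, hneg⟩ : ∃ w : E, c * ‖w‖ < |L w| ∧ L w < 0 := by
    rcases lt_or_ge (L w) 0 with h' | h'
    · exact ⟨w, hw, h'⟩
    · refine ⟨-w, ?_, ?_⟩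
      · simpa [abs_neg] using hw
      · have : |L w| > 0 := lt_of_le_of_lt (by positivity) hw
        have : L w > 0 := lt_of_le_of_ne h' (fun e => by simp [← e] at this)
        simpa using neg_neg_iff_pos.mpr this
  have hLw : L w < -(c * ‖w‖) := by
    rcases abs_cases (L w) with ⟨he, _⟩ | ⟨he, _⟩
    · linarith
    · linarith
  set κ : ℝ := -(L w + c * ‖w‖) with hκ
  have hκpos : 0 < κ := by simp only [hκ]; linarith
  have hline : HasDerivAt (fun t : ℝ => fr (x + t • w)) (L w) 0 := by
    have hg : HasDerivAt (fun t : ℝ => x + t • w) w 0 := by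
      simpa using ((hasDerivAt_id (0:ℝ)).smul_const w).const_add x
    have h' : HasFDerivAt fr L (x + (0:ℝ) • w) := by simpa using h
    exact h'.comp_hasDerivAt (0:ℝ) hg
  have ho := (hline.isLittleO).bound (half_pos hκpos)
  have hpull : ∀ᶠ t : ℝ in 𝓝 0, fr x ≤ fr (x + t • w) + c * dist (x + t • w) x := by
    have hcont : ContinuousAt (fun t : ℝ => x + t • w) 0 := by fun_prop
    have := hcont.tendsto
    simp only [zero_smul, add_zero] at this
    exact this.eventually hev
  have hfin : ∀ᶠ t : ℝ in 𝓝[>] (0:ℝ), False := by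
    filter_upwards [nhdsWithin_le_nhds ho, nhdsWithin_le_nhds hpull,
      self_mem_nhdsWithin] with t hot hpt (htpos : 0 < t)
    have hdist : dist (x + t • w) x = t * ‖w‖ := by
      rw [dist_eq_norm]
      simp [norm_smul, abs_of_pos htpos]
    rw [hdist] at hpt
    simp only [zero_smul, add_zero, sub_zero, smul_eq_mul] at hot
    have hot' : |fr (x + t • w) - fr x - t * L w| ≤ κ/2 * |t| := hot
    obtain ⟨ha, hb⟩ := abs_le.mp hot'
    rw [abs_of_pos htpos] at ha hb
    nlinarith
  exact (hfin.exists).elim fun _ h => h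

lemma slopeM_eq_of_hasFDerivAt {E : Type*} [NormedAddCommGroup E] [NormedSpace ℝ E]
    {fr : E → ℝ} {L : E →L[ℝ] ℝ} {x : E} (h : HasFDerivAt fr L x) :
    slopeM (fun z => (fr z : EReal)) x = ENNReal.ofReal ‖L‖ := by
  refine le_antisymm (slopeM_le_of_hasFDerivAt h) ?_
  rw [slopeM_coe]
  refine le_sInf fun δ hδ => ?_
  obtain ⟨c, hc, rfl, hev⟩ := hδ
  exact ENNReal.ofReal_le_ofReal (norm_le_of_slope_wit h hc hev)
noncomputable def prj (i : Fin 2) : EuclideanSpace ℝ (Fin 2) →L[ℝ] ℝ :=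
  EuclideanSpace.proj i

lemma prj_apply (i : Fin 2) (q : EuclideanSpace ℝ (Fin 2)) : prj i q = q i := rfl

noncomputable def gv (p : EuclideanSpace ℝ (Fin 2)) : EuclideanSpace ℝ (Fin 2) :=
  (WithLp.equiv 2 (Fin 2 → ℝ)).symm
    ![p 0 / Real.sqrt (p 0 ^ 2 + p 1 ^ 4), 2 * p 1 ^ 3 / Real.sqrt (p 0 ^ 2 + p 1 ^ 4)]

lemma gv_apply0 (p : EuclideanSpace ℝ (Fin 2)) :
    gv p 0 = p 0 / Real.sqrt (p 0 ^ 2 + p 1 ^ 4) := rfl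
lemma gv_apply1 (p : EuclideanSpace ℝ (Fin 2)) :
    gv p 1 = 2 * p 1 ^ 3 / Real.sqrt (p 0 ^ 2 + p 1 ^ 4) := rfl

lemma hpos (p : EuclideanSpace ℝ (Fin 2)) (hp : p ≠ 0) : 0 < p 0 ^ 2 + p 1 ^ 4 := by
  rcases eq_or_ne (p 0) 0 with h0 | h0
  · rcases eq_or_ne (p 1) 0 with h1 | h1
    · exact absurd (show p = 0 by ext i; fin_cases i <;> simp [h0, h1]) hp
    · positivity
  · positivity

lemma key_deriv (p : EuclideanSpace ℝ (Fin 2)) (hp : p ≠ 0) :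
    HasFDerivAt (fun q : EuclideanSpace ℝ (Fin 2) => Real.sqrt (q 0 ^ 2 + q 1 ^ 4))
      (innerSL ℝ (gv p)) p := by
  have hh : 0 < p 0 ^ 2 + p 1 ^ 4 := hpos p hp
  set s : ℝ := Real.sqrt (p 0 ^ 2 + p 1 ^ 4) with hs
  have hspos : 0 < s := Real.sqrt_pos.mpr hh
  have h0 : HasFDerivAt (fun q : EuclideanSpace ℝ (Fin 2) => q 0) (prj 0) p :=
    (prj 0).hasFDerivAt
  have h1 : HasFDerivAt (fun q : EuclideanSpace ℝ (Fin 2) => q 1) (prj 1) p :=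
    (prj 1).hasFDerivAt
  have hsum : HasFDerivAt (fun q : EuclideanSpace ℝ (Fin 2) => q 0 ^ 2 + q 1 ^ 4)
      (((2:ℝ) * p 0 ^ 1) • prj 0 + ((4:ℝ) * p 1 ^ 3) • prj 1) p := by
    have h2 := (hasDerivAt_pow 2 (p 0)).comp_hasFDerivAt p h0
    have h4 := (hasDerivAt_pow 4 (p 1)).comp_hasFDerivAt p h1
    exact_mod_cast h2.add h4
  have hsqrt := (Real.hasDerivAt_sqrt (ne_of_gt hh)).comp_hasFDerivAt p hsum
  refine hsqrt.congr_fderiv ?_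
  symm
  ext w
  simp only [innerSL_apply_apply, PiLp.inner_apply, RCLike.inner_apply, conj_trivial,
    ContinuousLinearMap.coe_smul', Pi.smul_apply, ContinuousLinearMap.add_apply,
    ContinuousLinearMap.coe_smul', prj_apply, smul_eq_mul]
  rw [Fin.sum_univ_two, gv_apply0, gv_apply1]
  field_simp
  ring

lemma gv_norm (p : EuclideanSpace ℝ (Fin 2)) (hp : p ≠ 0) :
    ‖gv p‖ = Real.sqrt ((p 0 ^ 2 + 4 * p 1 ^ 6) / (p 0 ^ 2 + p 1 ^ 4)) := by
  have hh : 0 < p 0 ^ 2 + p 1 ^ 4 := hpos p hp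
  have hs : Real.sqrt (p 0 ^ 2 + p 1 ^ 4) ^ 2 = p 0 ^ 2 + p 1 ^ 4 := Real.sq_sqrt hh.le
  have hspos : 0 < Real.sqrt (p 0 ^ 2 + p 1 ^ 4) := Real.sqrt_pos.mpr hh
  rw [EuclideanSpace.norm_eq]
  congr 1
  rw [Fin.sum_univ_two, gv_apply0, gv_apply1]
  rw [Real.norm_eq_abs, Real.norm_eq_abs, sq_abs, sq_abs]
  field_simp
  rw [hs]
  ring
lemma slope_formula (p : EuclideanSpace ℝ (Fin 2)) (hp : p ≠ 0) :
    slopeM (fun q : EuclideanSpace ℝ (Fin 2) =>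
        ((Real.sqrt (q 0 ^ 2 + q 1 ^ 4) : ℝ) : EReal)) p
      = ENNReal.ofReal (Real.sqrt ((p 0 ^ 2 + 4 * p 1 ^ 6) / (p 0 ^ 2 + p 1 ^ 4))) := by
  have h := slopeM_eq_of_hasFDerivAt (key_deriv p hp)
  rw [innerSL_apply_norm, gv_norm p hp] at h
  exact h

lemma slope_zero :
    slopeM (fun q : EuclideanSpace ℝ (Fin 2) =>
        ((Real.sqrt (q 0 ^ 2 + q 1 ^ 4) : ℝ) : EReal)) 0 = 0 := by
  have h := slopeM_coe (fun q : EuclideanSpace ℝ (Fin 2) => Real.sqrt (q 0 ^ 2 + q 1 ^ 4)) 0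
  rw [h]
  refine le_antisymm ?_ zero_le
  refine ENNReal.le_of_forall_pos_le_add fun ε hε _ => ?_
  refine le_trans (sInf_le ⟨(ε:ℝ), hε, rfl, Eventually.of_forall fun z => ?_⟩)
    (by simp [ENNReal.ofReal_coe_nnreal])
  have h0 : ((0 : EuclideanSpace ℝ (Fin 2)) 0 : ℝ) = 0 := rfl
  have h1 : ((0 : EuclideanSpace ℝ (Fin 2)) 1 : ℝ) = 0 := rfl
  rw [h0, h1]
  norm_num
  positivity

lemma fE_cont : Continuous (fun q : EuclideanSpace ℝ (Fin 2) =>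
    ((Real.sqrt (q 0 ^ 2 + q 1 ^ 4) : ℝ) : EReal)) := by
  have c0 : Continuous fun q : EuclideanSpace ℝ (Fin 2) => q 0 := (prj 0).continuous
  have c1 : Continuous fun q : EuclideanSpace ℝ (Fin 2) => q 1 := (prj 1).continuous
  have hc : Continuous fun q : EuclideanSpace ℝ (Fin 2) => Real.sqrt (q 0 ^ 2 + q 1 ^ 4) :=
    ((c0.pow 2).add (c1.pow 4)).sqrt
  exact continuous_coe_real_ereal.comp hc

lemma ident_Malpha (α : ℝ) (hα : 0 < α) :
    Identifiable (fun q : EuclideanSpace ℝ (Fin 2) =>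
        ((Real.sqrt (q 0 ^ 2 + q 1 ^ 4) : ℝ) : EReal))
      {q : EuclideanSpace ℝ (Fin 2) | |q 0| ≤ α * q 1 ^ 2} 0 := by
  have c0 : Continuous fun q : EuclideanSpace ℝ (Fin 2) => q 0 := (prj 0).continuous
  have c1 : Continuous fun q : EuclideanSpace ℝ (Fin 2) => q 1 := (prj 1).continuous
  refine ⟨isClosed_le c0.abs (continuous_const.mul (c1.pow 2)), ?_, ?_⟩
  · show |(0 : EuclideanSpace ℝ (Fin 2)) 0| ≤ α * (0 : EuclideanSpace ℝ (Fin 2)) 1 ^ 2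
    have h0 : ((0 : EuclideanSpace ℝ (Fin 2)) 0 : ℝ) = 0 := rfl
    have h1 : ((0 : EuclideanSpace ℝ (Fin 2)) 1 : ℝ) = 0 := rfl
    rw [h0, h1]; norm_num
  · set κ : ℝ := Real.sqrt (α ^ 2 / (1 + α ^ 2)) with hκdef
    have hκ : 0 < κ := Real.sqrt_pos.mpr (by positivity)
    unfold identModulus
    refine lt_of_lt_of_le (ENNReal.ofReal_pos.mpr hκ)
      (Filter.le_liminf_of_le (by isBoundedDefault) ?_)
    refine Filter.Eventually.filter_mono inf_le_left ?_
    filter_upwards [self_mem_nhdsWithin] with z hz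
    have hz' : α * z 1 ^ 2 < |z 0| := not_le.mp hz
    have hz0 : z 0 ≠ 0 := by
      intro h
      rw [h] at hz'
      simp only [abs_zero] at hz'
      nlinarith [sq_nonneg (z 1)]
    have hzne : z ≠ 0 := fun h => hz0 (by rw [h]; rfl)
    rw [slope_formula z hzne]
    refine ENNReal.ofReal_le_ofReal (Real.sqrt_le_sqrt ?_)
    have hkey : α ^ 2 * z 1 ^ 4 ≤ z 0 ^ 2 := by
      have h1 : (α * z 1 ^ 2) ^ 2 ≤ |z 0| ^ 2 := pow_le_pow_left₀ (by positivity) hz'.le 2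
      rw [sq_abs] at h1
      nlinarith [h1]
    have hden : 0 < z 0 ^ 2 + z 1 ^ 4 := by positivity
    rw [div_le_div_iff₀ (by positivity) hden]
    nlinarith [sq_nonneg (z 1 ^ 3), sq_nonneg (z 0), sq_nonneg (z 1)]

lemma small_slope {M : Set (EuclideanSpace ℝ (Fin 2))}
    (hI : Identifiable (fun q : EuclideanSpace ℝ (Fin 2) =>
        ((Real.sqrt (q 0 ^ 2 + q 1 ^ 4) : ℝ) : EReal)) M 0) :
    ∃ r : ℝ, 0 < r ∧ ∃ ε : ℝ, 0 < ε ∧ ∀ z : EuclideanSpace ℝ (Fin 2), dist z 0 < ε →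
      slopeM (fun q : EuclideanSpace ℝ (Fin 2) =>
        ((Real.sqrt (q 0 ^ 2 + q 1 ^ 4) : ℝ) : EReal)) z ≤ ENNReal.ofReal r → z ∈ M := by
  obtain ⟨hcl, hmem, hposm⟩ := hI
  unfold identModulus at hposm
  obtain ⟨c, hc0, hclim⟩ := exists_between hposm
  have hev : ∀ᶠ z in _, c < slopeM _ z := Filter.eventually_lt_of_lt_liminf hclim
  rw [Filter.eventually_inf] at hev
  obtain ⟨s, hs, t, ht, hst⟩ := hev
  rw [Metric.mem_nhdsWithin_iff] at hs
  obtain ⟨ε₁, hε₁, hs⟩ := hs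
  obtain ⟨W, hW, hWt⟩ := ht
  have hfc : Tendsto (fun q : EuclideanSpace ℝ (Fin 2) =>
      ((Real.sqrt (q 0 ^ 2 + q 1 ^ 4) : ℝ) : EReal)) (𝓝 0) (𝓝 _) := fE_cont.continuousAt
  have hpre : (fun q : EuclideanSpace ℝ (Fin 2) =>
      ((Real.sqrt (q 0 ^ 2 + q 1 ^ 4) : ℝ) : EReal)) ⁻¹' W ∈
      𝓝 (0 : EuclideanSpace ℝ (Fin 2)) := hfc hW
  obtain ⟨ε₂, hε₂, hball⟩ := Metric.mem_nhds_iff.mp hpre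
  set r : ℝ := (min c 1).toReal with hrdef
  have hmin1 : min c 1 ≠ ⊤ := ne_top_of_le_ne_top (by simp) (min_le_right _ _)
  have hr : 0 < r := ENNReal.toReal_pos (lt_min hc0 zero_lt_one).ne' hmin1
  refine ⟨r, hr, min ε₁ ε₂, lt_min hε₁ hε₂, fun z hz hslope => ?_⟩
  by_contra hzM
  have hz1 : z ∈ Metric.ball (0 : EuclideanSpace ℝ (Fin 2)) ε₁ ∩ Mᶜ :=
    ⟨by simpa using lt_of_lt_of_le hz (min_le_left _ _), hzM⟩
  have hz2 : z ∈ t := hWt (hball (by simpa using lt_of_lt_of_le hz (min_le_right _ _)))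
  have := hst z ⟨hs hz1, hz2⟩
  have hle : slopeM (fun q : EuclideanSpace ℝ (Fin 2) =>
      ((Real.sqrt (q 0 ^ 2 + q 1 ^ 4) : ℝ) : EReal)) z ≤ c := by
    refine le_trans hslope ?_
    rw [hrdef, ENNReal.ofReal_toReal hmin1]
    exact min_le_left _ _
  exact absurd this (not_lt.mpr hle)

noncomputable def qc (δ v : ℝ) : EuclideanSpace ℝ (Fin 2) :=
  (WithLp.equiv 2 (Fin 2 → ℝ)).symm ![δ * v ^ 2, v]

lemma qc_apply0 (δ v : ℝ) : qc δ v 0 = δ * v ^ 2 := rfl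
lemma qc_apply1 (δ v : ℝ) : qc δ v 1 = v := rfl

lemma qc_ne (δ v : ℝ) (hv : v ≠ 0) : qc δ v ≠ 0 := by
  intro h
  have : qc δ v 1 = (0 : EuclideanSpace ℝ (Fin 2)) 1 := by rw [h]
  rw [qc_apply1] at this
  exact hv this

lemma qc_slope (r v : ℝ) (hr : 0 < r) (hv0 : 0 < v) (hvr : v ≤ r / 4) :
    slopeM (fun q : EuclideanSpace ℝ (Fin 2) =>
        ((Real.sqrt (q 0 ^ 2 + q 1 ^ 4) : ℝ) : EReal)) (qc (r/2) v)
      ≤ ENNReal.ofReal r := by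
  rw [slope_formula _ (qc_ne _ _ hv0.ne')]
  refine ENNReal.ofReal_le_ofReal ?_
  rw [qc_apply0, qc_apply1]
  have hden : (0:ℝ) < (r/2 * v ^ 2) ^ 2 + v ^ 4 := by positivity
  have hratio : ((r/2 * v ^ 2) ^ 2 + 4 * v ^ 6) / ((r/2 * v ^ 2) ^ 2 + v ^ 4) ≤ r ^ 2 := by
    rw [div_le_iff₀ hden]
    have hv2 : v ^ 2 ≤ r ^ 2 / 16 := by nlinarith
    nlinarith [pow_pos hv0 4, sq_nonneg (r * v ^ 2), pow_pos hv0 2, sq_nonneg r]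
  calc Real.sqrt (((r/2 * v ^ 2) ^ 2 + 4 * v ^ 6) / ((r/2 * v ^ 2) ^ 2 + v ^ 4))
      ≤ Real.sqrt (r ^ 2) := Real.sqrt_le_sqrt hratio
  _ = r := Real.sqrt_sq hr.le

lemma qc_norm_le (δ v : ℝ) (hv1 : |v| ≤ 1) :
    ‖qc δ v‖ ≤ Real.sqrt (δ ^ 2 + 1) * |v| := by
  rw [EuclideanSpace.norm_eq, Fin.sum_univ_two, qc_apply0, qc_apply1]
  rw [Real.norm_eq_abs, Real.norm_eq_abs, sq_abs, sq_abs]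
  have hv2 : v ^ 2 ≤ 1 := by
    rw [← sq_abs]
    exact pow_le_one₀ (abs_nonneg v) hv1
  have h4 : v ^ 4 ≤ v ^ 2 := by nlinarith [sq_nonneg v]
  calc Real.sqrt ((δ * v ^ 2) ^ 2 + v ^ 2) ≤ Real.sqrt ((δ ^ 2 + 1) * v ^ 2) := by
        refine Real.sqrt_le_sqrt ?_
        nlinarith [sq_nonneg δ, sq_nonneg v]
  _ = Real.sqrt (δ ^ 2 + 1) * |v| := by
        rw [Real.sqrt_mul (by positivity), Real.sqrt_sq_eq_abs]

lemma not_ident_M0 :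
    ¬ Identifiable (fun q : EuclideanSpace ℝ (Fin 2) =>
        ((Real.sqrt (q 0 ^ 2 + q 1 ^ 4) : ℝ) : EReal))
      {q : EuclideanSpace ℝ (Fin 2) | q 0 = 0} 0 := by
  intro hI
  obtain ⟨r, hr, ε, hε, hsmall⟩ := small_slope hI
  set δ : ℝ := r / 2 with hδ
  have hsq : 0 < Real.sqrt (δ ^ 2 + 1) := Real.sqrt_pos.mpr (by positivity)
  set v : ℝ := min 1 (min (ε / (2 * Real.sqrt (δ ^ 2 + 1))) (r / 4)) with hv
  have hv0 : 0 < v := lt_min one_pos (lt_min (by positivity) (by positivity))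
  have hv1 : v ≤ 1 := min_le_left _ _
  have hvr : v ≤ r / 4 := le_trans (min_le_right _ _) (min_le_right _ _)
  have hvε : v ≤ ε / (2 * Real.sqrt (δ ^ 2 + 1)) := le_trans (min_le_right _ _) (min_le_left _ _)
  have hdist : dist (qc δ v) 0 < ε := by
    rw [dist_zero_right]
    refine lt_of_le_of_lt (qc_norm_le δ v (by rw [abs_of_pos hv0]; exact hv1)) ?_
    rw [abs_of_pos hv0]
    calc Real.sqrt (δ ^ 2 + 1) * v ≤ Real.sqrt (δ ^ 2 + 1) * (ε / (2 * Real.sqrt (δ ^ 2 + 1))) :=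
          mul_le_mul_of_nonneg_left hvε hsq.le
    _ = ε / 2 := by field_simp
    _ < ε := by linarith
  have := hsmall (qc δ v) hdist (qc_slope r v hr hv0 hvr)
  have h0 : qc δ v 0 = 0 := this
  rw [qc_apply0] at h0
  nlinarith [pow_pos hv0 2]

lemma no_min :
    ¬ ∃ M : Set (EuclideanSpace ℝ (Fin 2)),
        Identifiable (fun q : EuclideanSpace ℝ (Fin 2) =>
          ((Real.sqrt (q 0 ^ 2 + q 1 ^ 4) : ℝ) : EReal)) M 0 ∧
        ∀ M' : Set (EuclideanSpace ℝ (Fin 2)),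
          Identifiable (fun q : EuclideanSpace ℝ (Fin 2) =>
            ((Real.sqrt (q 0 ^ 2 + q 1 ^ 4) : ℝ) : EReal)) M' 0 →
          ∃ N ∈ 𝓝 (0 : EuclideanSpace ℝ (Fin 2)), M ∩ N ⊆ M' := by
  rintro ⟨M, hIM, hminl⟩
  obtain ⟨r, hr, ε, hε, hsmall⟩ := small_slope hIM
  obtain ⟨N, hN, hsub⟩ := hminl _ (ident_Malpha (r / 4) (by positivity))
  obtain ⟨ρ, hρ, hball⟩ := Metric.mem_nhds_iff.mp hN
  set δ : ℝ := r / 2 with hδ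
  have hsq : 0 < Real.sqrt (δ ^ 2 + 1) := Real.sqrt_pos.mpr (by positivity)
  set v : ℝ := min 1 (min (min ε ρ / (2 * Real.sqrt (δ ^ 2 + 1))) (r / 4)) with hv
  have hεερ : 0 < min ε ρ := lt_min hε hρ
  have hv0 : 0 < v := lt_min one_pos (lt_min (by positivity) (by positivity))
  have hv1 : v ≤ 1 := min_le_left _ _
  have hvr : v ≤ r / 4 := le_trans (min_le_right _ _) (min_le_right _ _)
  have hvε : v ≤ min ε ρ / (2 * Real.sqrt (δ ^ 2 + 1)) :=
    le_trans (min_le_right _ _) (min_le_left _ _)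
  have hnorm : ‖qc δ v‖ < min ε ρ := by
    refine lt_of_le_of_lt (qc_norm_le δ v (by rw [abs_of_pos hv0]; exact hv1)) ?_
    rw [abs_of_pos hv0]
    calc Real.sqrt (δ ^ 2 + 1) * v
        ≤ Real.sqrt (δ ^ 2 + 1) * (min ε ρ / (2 * Real.sqrt (δ ^ 2 + 1))) :=
          mul_le_mul_of_nonneg_left hvε hsq.le
    _ = min ε ρ / 2 := by field_simp
    _ < min ε ρ := by linarith
  have hdist : dist (qc δ v) 0 < ε := by
    rw [dist_zero_right]
    exact lt_of_lt_of_le hnorm (min_le_left _ _)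
  have hqM : qc δ v ∈ M := hsmall (qc δ v) hdist (qc_slope r v hr hv0 hvr)
  have hqN : qc δ v ∈ N := hball (by
    rw [Metric.mem_ball, dist_zero_right]
    exact lt_of_lt_of_le hnorm (min_le_right _ _))
  have hqα : qc δ v ∈ {q : EuclideanSpace ℝ (Fin 2) | |q 0| ≤ r / 4 * q 1 ^ 2} :=
    hsub ⟨hqM, hqN⟩
  have : |δ * v ^ 2| ≤ r / 4 * v ^ 2 := by
    have := hqα
    rwa [Set.mem_setOf_eq, qc_apply0, qc_apply1] at this
  rw [abs_of_pos (by positivity)] at this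
  nlinarith [pow_pos hv0 2]

/-- The example `f(u,v) = √(u² + v⁴)`: (i) the slope formula; (ii) each set
`M_α = {|u| ≤ αv²}` (α > 0) is identifiable at `(0,0)`; (iii) `M₀ = {u = 0}` is not
identifiable at `(0,0)`; and hence (iv) there is no locally minimal identifiable set
at `(0,0)`. -/
theorem no_locally_minimal_identifiable_example :
    (slopeM (fun q : EuclideanSpace ℝ (Fin 2) =>
        ((Real.sqrt (q 0 ^ 2 + q 1 ^ 4) : ℝ) : EReal)) 0 = 0) ∧
    (∀ p : EuclideanSpace ℝ (Fin 2), p ≠ 0 →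
      slopeM (fun q : EuclideanSpace ℝ (Fin 2) =>
          ((Real.sqrt (q 0 ^ 2 + q 1 ^ 4) : ℝ) : EReal)) p
        = ENNReal.ofReal (Real.sqrt ((p 0 ^ 2 + 4 * p 1 ^ 6) / (p 0 ^ 2 + p 1 ^ 4)))) ∧
    (∀ α : ℝ, 0 < α →
      Identifiable (fun q : EuclideanSpace ℝ (Fin 2) =>
          ((Real.sqrt (q 0 ^ 2 + q 1 ^ 4) : ℝ) : EReal))
        {q : EuclideanSpace ℝ (Fin 2) | |q 0| ≤ α * q 1 ^ 2} 0) ∧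
    ¬ Identifiable (fun q : EuclideanSpace ℝ (Fin 2) =>
        ((Real.sqrt (q 0 ^ 2 + q 1 ^ 4) : ℝ) : EReal))
      {q : EuclideanSpace ℝ (Fin 2) | q 0 = 0} 0 ∧
    ¬ ∃ M : Set (EuclideanSpace ℝ (Fin 2)),
        Identifiable (fun q : EuclideanSpace ℝ (Fin 2) =>
          ((Real.sqrt (q 0 ^ 2 + q 1 ^ 4) : ℝ) : EReal)) M 0 ∧
        ∀ M' : Set (EuclideanSpace ℝ (Fin 2)),
          Identifiable (fun q : EuclideanSpace ℝ (Fin 2) =>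
            ((Real.sqrt (q 0 ^ 2 + q 1 ^ 4) : ℝ) : EReal)) M' 0 →
          ∃ N ∈ 𝓝 (0 : EuclideanSpace ℝ (Fin 2)), M ∩ N ⊆ M' := by
  exact ⟨slope_zero, slope_formula, ident_Malpha, not_ident_M0, no_min⟩
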